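/- Let x and y be natural numbers with x ≥ y. Then (x + y)^{x-y} = y^x holds if and only if there exists a natural number t such that x = t·(t+1)^{t-1} and y = (t+1)^{t-1}. -/

import Mathlib

lemma aux_pow_eq_pow {a b m n : ℕ} (ha : a ≠ 0) (hn : n ≠ 0) (hmn : Nat.Coprime m n)
    (h : a ^ m = b ^ n) : ∃ c, a = c ^ n ∧ b = c ^ m := by
  have hdvd : ∀ p, n ∣ a.factorization p := by
    intro p
    have h2 := congrArg (fun z => z.factorization p) h
    simp [Nat.factorization_pow] at h2
    exact hmn.symm.dvd_of_dvd_mul_left ⟨_, h2⟩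
  set c := a.factorization.prod (fun p k => p ^ (k / n)) with hc
  have hca : c ^ n = a := by
    rw [hc, Finsupp.prod, ← Finset.prod_pow]
    conv_rhs => rw [← Nat.factorization_prod_pow_eq_self ha, Finsupp.prod]
    apply Finset.prod_congr rfl
    intro p hp
    rw [← pow_mul, Nat.div_mul_cancel (hdvd p)]
  refine ⟨c, hca.symm, ?_⟩
  have : b ^ n = (c ^ m) ^ n := by
    rw [← h, ← hca, ← pow_mul, ← pow_mul, mul_comm]
  exact Nat.pow_left_injective hn this

/-- Task 10: for positive naturals `x, y` with `x ≥ y`, the equation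
`(x + y)^(x-y) = y^x` holds iff `x = t·(t+1)^(t-1)` and `y = (t+1)^(t-1)`
for some positive natural `t`. -/
theorem stmt_15 (x y : ℕ) (hy : 0 < y) (hxy : y ≤ x) :
    (x + y) ^ (x - y) = y ^ x ↔
      ∃ t : ℕ, 0 < t ∧ x = t * (t + 1) ^ (t - 1) ∧ y = (t + 1) ^ (t - 1) := by
  constructor
  · intro h
    rcases eq_or_lt_of_le hxy with heq | hlt
    · -- x = y
      subst heq
      have h1 : y ^ y = 1 := by simpa using h.symm
      have hy1 : y = 1 := (pow_eq_one_iff.mp h1).resolve_right hy.ne'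
      exact ⟨1, one_pos, by simp [hy1], by simp [hy1]⟩
    · -- y < x
      have hy2 : 2 ≤ y := by
        by_contra hc
        have hyy : y = 1 := by omega
        subst hyy
        simp only [one_pow] at h
        have := ((pow_eq_one_iff (n := x - 1)).mp h).resolve_right (by omega)
        omega
      obtain ⟨e, he⟩ : ∃ e, x - y = e := ⟨_, rfl⟩
      have hepos : 0 < e := by omega
      rw [he] at h
      obtain ⟨g, hg⟩ : ∃ g, Nat.gcd e x = g := ⟨_, rfl⟩
      have hgpos : 0 < g := hg ▸ Nat.gcd_pos_of_pos_left _ hepos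
      obtain ⟨l, hl⟩ : ∃ l, e / g = l := ⟨_, rfl⟩
      obtain ⟨k, hk⟩ : ∃ k, x / g = k := ⟨_, rfl⟩
      have hge : g * l = e := by rw [← hl, ← hg]; exact Nat.mul_div_cancel' (Nat.gcd_dvd_left e x)
      have hgx : g * k = x := by rw [← hk, ← hg]; exact Nat.mul_div_cancel' (Nat.gcd_dvd_right e x)
      have hlpos : 0 < l := by
        rcases Nat.eq_zero_or_pos l with h' | h'
        · exfalso; rw [h', mul_zero] at hge; omega
        · exact h'
      have hkpos : 0 < k := by
        rcases Nat.eq_zero_or_pos k with h' | h'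
        · exfalso; rw [h', mul_zero] at hgx; omega
        · exact h'
      have key : (x + y) ^ l = y ^ k := by
        apply Nat.pow_left_injective hgpos.ne'
        show ((x + y) ^ l) ^ g = (y ^ k) ^ g
        rw [← pow_mul, ← pow_mul, mul_comm l g, mul_comm k g, hge, hgx]
        exact h
      have hco : Nat.Coprime l k := by
        rw [← hl, ← hk, ← hg]
        exact Nat.coprime_div_gcd_div_gcd (hg ▸ hgpos)
      obtain ⟨c, hc1, hc2⟩ := aux_pow_eq_pow (by positivity) hkpos.ne' hco key
      -- hc1 : x + y = c ^ k, hc2 : y = c ^ l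
      have hcge2 : 2 ≤ c := by
        rcases Nat.lt_or_ge c 2 with hcc | hcc
        · exfalso
          interval_cases c
          · rw [Nat.zero_pow hlpos] at hc2; omega
          · rw [one_pow] at hc2; omega
        · exact hcc
      have hkl : l < k := by
        have hlt2 : c ^ l < c ^ k := by rw [← hc1, ← hc2]; omega
        exact (Nat.pow_lt_pow_iff_right hcge2).mp hlt2
      have hkelx : k * e = l * x := by
        apply Nat.pow_right_injective hcge2
        show c ^ (k * e) = c ^ (l * x)
        rw [pow_mul, pow_mul, ← hc1, ← hc2]
        exact h
      obtain ⟨m, hm⟩ : ∃ m, k - l = m := ⟨_, rfl⟩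
      have hmpos : 0 < m := by omega
      obtain ⟨s, hs⟩ : ∃ s, c ^ m = s := ⟨_, rfl⟩
      have hs2 : 2 ≤ s := by
        rw [← hs]
        calc 2 ≤ c := hcge2
        _ ≤ c ^ m := Nat.le_self_pow hmpos.ne' c
      have hxys : x + y = y * s := by
        rw [hc1, hc2, ← hs, ← pow_add]
        congr 1
        omega
      have hdist : y * s = y * (s - 1) + y := by
        conv_lhs => rw [show s = (s - 1) + 1 by omega]
        rw [mul_add, mul_one]
      have hxval : x = y * (s - 1) := by omega
      have hs3 : 3 ≤ s := by
        by_contra hc'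
        have hss : s = 2 := by omega
        rw [hss] at hxval
        norm_num at hxval
        omega
      have hdist2 : y * (s - 1) = y * (s - 2) + y := by
        conv_lhs => rw [show s - 1 = (s - 2) + 1 by omega]
        rw [mul_add, mul_one]
      have heval : e = y * (s - 2) := by omega
      have hklm : k = l + m := by omega
      have hls : l = m * (s - 2) := by
        have h5 : (l + m) * (y * (s - 2)) = l * (y * (s - 1)) := by
          rw [← hklm, ← heval, ← hxval]; exact hkelx
        have h6 : y * ((l + m) * (s - 2)) = y * (l * (s - 1)) := by
          calc y * ((l + m) * (s - 2)) = (l + m) * (y * (s - 2)) := by ring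
          _ = l * (y * (s - 1)) := h5
          _ = y * (l * (s - 1)) := by ring
        have h6' : (l + m) * (s - 2) = l * (s - 1) := Nat.eq_of_mul_eq_mul_left hy h6
        have h7 : l * (s - 2) + m * (s - 2) = l * (s - 2) + l := by
          rw [← add_mul, h6']
          have h9 : s - 1 = (s - 2) + 1 := by omega
          rw [h9, mul_add, mul_one]
        omega
      refine ⟨s - 1, by omega, ?_, ?_⟩
      · have h8 : s - 1 + 1 = s := by omega
        have h9 : s - 1 - 1 = s - 2 := by omega
        rw [h8, h9, hxval, hc2, hls, pow_mul, hs]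
        ring
      · have h8 : s - 1 + 1 = s := by omega
        have h9 : s - 1 - 1 = s - 2 := by omega
        rw [h8, h9, hc2, hls, pow_mul, hs]
  · rintro ⟨t, ht, hx, hyv⟩
    subst hx; subst hyv
    obtain ⟨w, hw⟩ : ∃ w, (t + 1) ^ (t - 1) = w := ⟨_, rfl⟩
    rw [hw]
    have hw1 : t * w + w = (t + 1) ^ t := by
      have h1 : t * w + w = (t + 1) * w := by ring
      rw [h1, ← hw, ← pow_succ']
      congr 1
      omega
    have hw2 : t * w - w = (t - 1) * w := by
      cases t with
      | zero => omega
      | succ n => simp [Nat.succ_sub_one, Nat.succ_mul]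
    rw [hw1, hw2, ← hw, ← pow_mul, ← pow_mul]
    congr 1
    ring
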